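/- Let P be the set of all finite products ∏ᵢ₌₁ⁿ [[aᵢ, eᵢ],[1, 0]] of 2×2 integer matrices, where n ≥ 1, each aᵢ is an odd positive integer, each eᵢ ∈ {+1,−1}, and aᵢ + eᵢ ≥ 2 for all i. Then P = S₊₁ ∪ S₋₁, where S₊₁ = { [[a, b],[c, d]] ∈ Γ̃ : a,b,c,d ≥ 0, 0 ≤ d ≤ b, 1 ≤ c ≤ a, a > g·b } and S₋₁ = { [[a, −b],[c, −d]] ∈ Γ̃ : a,b,c,d ≥ 0, 0 ≤ d ≤ b, 1 ≤ c ≤ a, a > (G+1)·b }. -/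

import Mathlib

noncomputable section

/-- The golden ratio `G = (1+√5)/2`. -/
def Gphi : ℝ := (1 + Real.sqrt 5) / 2

/-- `g = (√5−1)/2`. -/
def gphi : ℝ := (Real.sqrt 5 - 1) / 2

/-- Entrywise congruence mod 2 of integer 2×2 matrices. -/
def Mod2Eq (σ τ : Matrix (Fin 2) (Fin 2) ℤ) : Prop := ∀ i j, σ i j % 2 = τ i j % 2

/-- `Γ̃ = {σ ∈ GL(2,ℤ) : σ ≡ I, A or B (mod 2)}`. -/
def GammaTilde : Set (Matrix (Fin 2) (Fin 2) ℤ) :=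
  {σ | (σ.det = 1 ∨ σ.det = -1) ∧
    (Mod2Eq σ 1 ∨ Mod2Eq σ !![0, 1; 1, 1] ∨ Mod2Eq σ !![1, 1; 1, 0])}

/-- `S₊₁`. -/
def Splus : Set (Matrix (Fin 2) (Fin 2) ℤ) :=
  {σ | σ ∈ GammaTilde ∧ 0 ≤ σ 0 0 ∧ 0 ≤ σ 0 1 ∧ 0 ≤ σ 1 0 ∧ 0 ≤ σ 1 1 ∧
    σ 1 1 ≤ σ 0 1 ∧ 1 ≤ σ 1 0 ∧ σ 1 0 ≤ σ 0 0 ∧ gphi * (σ 0 1 : ℝ) < (σ 0 0 : ℝ)}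

/-- `S₋₁` (matrices of the form `[[a, −b],[c, −d]]`). -/
def Sminus : Set (Matrix (Fin 2) (Fin 2) ℤ) :=
  {σ | σ ∈ GammaTilde ∧ 0 ≤ σ 0 0 ∧ 0 ≤ -σ 0 1 ∧ 0 ≤ σ 1 0 ∧ 0 ≤ -σ 1 1 ∧
    -σ 1 1 ≤ -σ 0 1 ∧ 1 ≤ σ 1 0 ∧ σ 1 0 ≤ σ 0 0 ∧
    (Gphi + 1) * ((-σ 0 1 : ℤ) : ℝ) < (σ 0 0 : ℝ)}

/-- The set `P` of finite products `∏ᵢ [[aᵢ, eᵢ],[1,0]]`. -/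
def Pset : Set (Matrix (Fin 2) (Fin 2) ℤ) :=
  {M | ∃ (n : ℕ) (a e : ℕ → ℤ), 0 < n ∧
    (∀ i < n, Odd (a i) ∧ 0 < a i ∧ (e i = 1 ∨ e i = -1) ∧ 2 ≤ a i + e i) ∧
    M = ((List.range n).map (fun i => !![a i, e i; 1, 0])).prod}

/-! ### auxiliary -/

abbrev Mat := Matrix (Fin 2) (Fin 2) ℤ

def Mmat (a e : ℤ) : Mat := !![a, e; 1, 0]

def Par (σ : Mat) : Prop :=
  Mod2Eq σ 1 ∨ Mod2Eq σ !![0, 1; 1, 1] ∨ Mod2Eq σ !![1, 1; 1, 0]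

lemma s_sq : Real.sqrt 5 ^ 2 = 5 := Real.sq_sqrt (by norm_num)
lemma s_gt : (2:ℝ) < Real.sqrt 5 := by
  nlinarith [s_sq, Real.sqrt_nonneg 5]
lemma s_lt : Real.sqrt 5 < 9/4 := by
  nlinarith [s_sq, Real.sqrt_nonneg 5]

lemma irr5 (p q : ℤ) (hq : q ≠ 0) : (p:ℝ) ≠ Real.sqrt 5 * q := by
  intro h
  have h5 : Irrational (Real.sqrt 5) := by
    have := Nat.Prime.irrational_sqrt (p := 5) (by norm_num)
    simpa using this
  have : Real.sqrt 5 = (p:ℝ) / (q:ℝ) := by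
    field_simp [h]
    linarith [h]
  rw [this] at h5
  have : ((p / q : ℚ) : ℝ) = (p:ℝ)/(q:ℝ) := by push_cast; ring
  exact ((p/q : ℚ).not_irrational (by rw [← this] at h5; exact h5))

lemma gphi_iff (A B : ℤ) (hB : 0 ≤ B) :
    gphi * (B:ℝ) < (A:ℝ) ↔ 0 < 2*A+B ∧ 5*B^2 < (2*A+B)^2 := by
  have hs := s_sq
  have h2 := s_gt
  have hBR : (0:ℝ) ≤ (B:ℝ) := by exact_mod_cast hB
  have hsB : (0:ℝ) ≤ Real.sqrt 5 * B := by positivity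
  constructor
  · intro h
    have key : Real.sqrt 5 * B < 2*(A:ℝ) + B := by unfold gphi at h; linarith
    have h1 : (0:ℝ) < 2*A+B := by linarith
    refine ⟨by exact_mod_cast h1, ?_⟩
    have h2' : ((5*B^2 : ℤ):ℝ) < (((2*A+B)^2:ℤ):ℝ) := by push_cast; nlinarith
    exact_mod_cast h2'
  · rintro ⟨h1, h2'⟩
    have h1R : (0:ℝ) < 2*(A:ℝ)+B := by exact_mod_cast h1
    have h2R : 5*(B:ℝ)^2 < (2*(A:ℝ)+B)^2 := by exact_mod_cast h2'
    have key : Real.sqrt 5 * B < 2*(A:ℝ) + B := by nlinarith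
    unfold gphi; linarith

lemma Gphi_iff (A B : ℤ) (hB : 0 ≤ B) :
    (Gphi + 1) * (B:ℝ) < (A:ℝ) ↔ 0 < 2*A-3*B ∧ 5*B^2 < (2*A-3*B)^2 := by
  have hs := s_sq
  have h2 := s_gt
  have hBR : (0:ℝ) ≤ (B:ℝ) := by exact_mod_cast hB
  have hsB : (0:ℝ) ≤ Real.sqrt 5 * B := by positivity
  constructor
  · intro h
    have key : Real.sqrt 5 * B < 2*(A:ℝ) - 3*B := by unfold Gphi at h; linarith
    have h1 : (0:ℝ) < 2*A-3*B := by linarith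
    refine ⟨by exact_mod_cast h1, ?_⟩
    have h2' : ((5*B^2 : ℤ):ℝ) < (((2*A-3*B)^2:ℤ):ℝ) := by push_cast; nlinarith
    exact_mod_cast h2'
  · rintro ⟨h1, h2'⟩
    have h1R : (0:ℝ) < 2*(A:ℝ)-3*B := by exact_mod_cast h1
    have h2R : 5*(B:ℝ)^2 < (2*(A:ℝ)-3*B)^2 := by exact_mod_cast h2'
    have key : Real.sqrt 5 * B < 2*(A:ℝ) - 3*B := by nlinarith
    unfold Gphi; linarith

/-! ### mod 2 machinery -/

lemma mod2_mul {σ τ σ' τ' : Mat} (h1 : Mod2Eq σ σ') (h2 : Mod2Eq τ τ') :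
    Mod2Eq (σ * τ) (σ' * τ') := by
  intro i j
  simp only [Matrix.mul_apply, Fin.sum_univ_two]
  rw [Int.add_emod, Int.mul_emod, Int.mul_emod (σ i 1), h1 i 0, h1 i 1, h2 0 j, h2 1 j,
    ← Int.mul_emod, ← Int.mul_emod, ← Int.add_emod]

lemma mod2_trans {σ τ ρ : Mat} (h1 : Mod2Eq σ τ) (h2 : Mod2Eq τ ρ) : Mod2Eq σ ρ :=
  fun i j => (h1 i j).trans (h2 i j)

lemma mod2_concrete (a b c d a' b' c' d' : ℤ) (h1 : a % 2 = a' % 2) (h2 : b % 2 = b' % 2)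
    (h3 : c % 2 = c' % 2) (h4 : d % 2 = d' % 2) :
    Mod2Eq !![a,b;c,d] !![a',b';c',d'] := by
  intro i j
  fin_cases i <;> fin_cases j <;> simpa

lemma mod2_entries {σ : Mat} {a b c d : ℤ} (h : Mod2Eq σ !![a,b;c,d]) :
    σ 0 0 % 2 = a % 2 ∧ σ 0 1 % 2 = b % 2 ∧ σ 1 0 % 2 = c % 2 ∧ σ 1 1 % 2 = d % 2 := by
  refine ⟨?_, ?_, ?_, ?_⟩ <;> [have := h 0 0; have := h 0 1; have := h 1 0; have := h 1 1] <;>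
    simpa using this

lemma par_mul_B {σ τ : Mat} (hσ : Par σ) (hτ : Mod2Eq τ !![1,1;1,0]) : Par (σ * τ) := by
  rcases hσ with h | h | h
  · refine Or.inr (Or.inr ?_)
    refine mod2_trans (mod2_mul h hτ) ?_
    rw [one_mul]
    exact fun i j => rfl
  · refine Or.inl ?_
    refine mod2_trans (mod2_mul h hτ) ?_
    have he : !![(0:ℤ),1;1,1] * !![1,1;1,0] = !![1,0;2,1] := by
      rw [Matrix.mul_fin_two]; norm_num
    rw [he]
    intro i j; fin_cases i <;> fin_cases j <;> simp
  · refine Or.inr (Or.inl ?_)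
    refine mod2_trans (mod2_mul h hτ) ?_
    have he : !![(1:ℤ),1;1,0] * !![1,1;1,0] = !![2,1;1,1] := by
      rw [Matrix.mul_fin_two]; norm_num
    rw [he]
    intro i j; fin_cases i <;> fin_cases j <;> simp

lemma par_mul_A {σ τ : Mat} (hσ : Par σ) (hτ : Mod2Eq τ !![0,1;1,1]) : Par (σ * τ) := by
  rcases hσ with h | h | h
  · refine Or.inr (Or.inl ?_)
    refine mod2_trans (mod2_mul h hτ) ?_
    rw [one_mul]
    exact fun i j => rfl
  · refine Or.inr (Or.inr ?_)
    refine mod2_trans (mod2_mul h hτ) ?_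
    have he : !![(0:ℤ),1;1,1] * !![0,1;1,1] = !![1,1;1,2] := by
      rw [Matrix.mul_fin_two]; norm_num
    rw [he]
    intro i j; fin_cases i <;> fin_cases j <;> simp
  · refine Or.inl ?_
    refine mod2_trans (mod2_mul h hτ) ?_
    have he : !![(1:ℤ),1;1,0] * !![0,1;1,1] = !![1,2;0,1] := by
      rw [Matrix.mul_fin_two]; norm_num
    rw [he]
    intro i j; fin_cases i <;> fin_cases j <;> simp

lemma Mmat_mod2_B {a e : ℤ} (ha : a % 2 = 1) (he : e = 1 ∨ e = -1) :
    Mod2Eq (Mmat a e) !![1,1;1,0] := by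
  rcases he with rfl | rfl <;>
    · apply mod2_concrete <;> omega

lemma Mmat_det (a e : ℤ) : (Mmat a e).det = -e := by
  simp [Mmat, Matrix.det_fin_two_of]

lemma mul_Mmat (σ : Mat) (a e : ℤ) :
    σ * Mmat a e = !![σ 0 0 * a + σ 0 1, σ 0 0 * e; σ 1 0 * a + σ 1 1, σ 1 0 * e] := by
  ext i j
  fin_cases i <;> fin_cases j <;>
    simp [Mmat, Matrix.mul_apply, Fin.sum_univ_two]

lemma base_mem (a e : ℤ) (ha : Odd a) (hap : 0 < a) (he : e = 1 ∨ e = -1)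
    (hae : 2 ≤ a + e) : Mmat a e ∈ Splus ∪ Sminus := by
  have ha2 : a % 2 = 1 := Int.odd_iff.1 ha
  have hpar : Par (Mmat a e) := Or.inr (Or.inr (Mmat_mod2_B ha2 he))
  have hs := s_sq; have h2 := s_gt; have h3 := s_lt
  rcases he with rfl | rfl
  · left
    have h1 : (1:ℝ) ≤ (a:ℝ) := by exact_mod_cast hap
    refine ⟨⟨Or.inr (by simp [Mmat_det]), hpar⟩, ?_, ?_, ?_, ?_, ?_, ?_, ?_, ?_⟩ <;>
      simp [Mmat] <;>
      first
        | omega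
        | (unfold gphi; nlinarith)
  · right
    have ha3 : 3 ≤ a := by omega
    have h1 : (3:ℝ) ≤ (a:ℝ) := by exact_mod_cast ha3
    refine ⟨⟨Or.inl (by simp [Mmat_det]), hpar⟩, ?_, ?_, ?_, ?_, ?_, ?_, ?_, ?_⟩ <;>
      simp [Mmat] <;>
      first
        | omega
        | (unfold Gphi; nlinarith)

lemma mem_Splus_mk (w x y z : ℤ)
    (hdet : (!![w,x;y,z] : Mat).det = 1 ∨ (!![w,x;y,z] : Mat).det = -1)
    (hpar : Par !![w,x;y,z]) (h1 : 0 ≤ w) (h2 : 0 ≤ x) (h3 : 0 ≤ y) (h4 : 0 ≤ z)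
    (h5 : z ≤ x) (h6 : 1 ≤ y) (h7 : y ≤ w) (h8 : gphi * (x:ℝ) < (w:ℝ)) :
    (!![w,x;y,z] : Mat) ∈ Splus := by
  refine ⟨⟨hdet, hpar⟩, ?_, ?_, ?_, ?_, ?_, ?_, ?_, ?_⟩ <;> simpa

lemma mem_Sminus_mk (w x y z : ℤ)
    (hdet : (!![w,x;y,z] : Mat).det = 1 ∨ (!![w,x;y,z] : Mat).det = -1)
    (hpar : Par !![w,x;y,z]) (h1 : 0 ≤ w) (h2 : 0 ≤ -x) (h3 : 0 ≤ y) (h4 : 0 ≤ -z)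
    (h5 : -z ≤ -x) (h6 : 1 ≤ y) (h7 : y ≤ w) (h8 : (Gphi + 1) * ((-x : ℤ):ℝ) < (w:ℝ)) :
    (!![w,x;y,z] : Mat) ∈ Sminus := by
  push_cast at h8
  refine ⟨⟨hdet, hpar⟩, ?_, ?_, ?_, ?_, ?_, ?_, ?_, ?_⟩ <;> simp <;>
    first
      | omega
      | linarith

lemma aux_minus (A B C D : ℤ) (hdet : B*C - A*D = 1 ∨ B*C - A*D = -1)
    (hB0 : 0 ≤ B) (hD0 : 0 ≤ D) (hDB : D ≤ B) (hC1 : 1 ≤ C) (hCA : C ≤ A)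
    (h1 : 0 < 2*A-3*B) (h2 : 5*B^2 < (2*A-3*B)^2) :
    2*B+1 ≤ A ∧ D+1 ≤ C ∧ B-D ≤ A-C := by
  have hA1 : 1 ≤ A := le_trans hC1 hCA
  have hAB : 2*B+1 ≤ A := by
    by_cases hB : B = 0
    · omega
    · have hB1 : 1 ≤ B := by omega
      nlinarith [sq_nonneg (2*A-3*B)]
  refine ⟨hAB, ?_, ?_⟩
  · by_contra hcon
    push_neg at hcon
    have hB1 : 1 ≤ B := by omega
    have k1 : 0 ≤ B * (D - C) := mul_nonneg hB0 (by omega)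
    have k2 : 0 ≤ D * (A - 2*B - 1) := mul_nonneg hD0 (by omega)
    have k3 : 0 ≤ (B - 1) * D := mul_nonneg (by omega) hD0
    rcases hdet with h | h <;> nlinarith [k1, k2, k3]
  · by_contra hcon
    push_neg at hcon
    rcases eq_or_lt_of_le hDB with heq | hlt
    · omega
    · have k1 : 0 ≤ (B - D - 1) * (A - B) := mul_nonneg (by omega) (by omega)
      have k2 : 0 ≤ B * (C - (A + D + 1 - B)) := mul_nonneg hB0 (by omega)
      rcases hdet with h | h <;> nlinarith [k1, k2]

lemma sq_mono {x y : ℤ} (h0 : 0 ≤ x) (h : x ≤ y) : x^2 ≤ y^2 := by nlinarith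

set_option maxHeartbeats 2000000 in
lemma step_mem (σ : Mat) (hσ : σ ∈ Splus ∪ Sminus) (a e : ℤ) (ha : Odd a) (hap : 0 < a)
    (he : e = 1 ∨ e = -1) (hae : 2 ≤ a + e) : σ * Mmat a e ∈ Splus ∪ Sminus := by
  have ha2 : a % 2 = 1 := Int.odd_iff.1 ha
  have ha1 : 1 ≤ a := hap
  have hpar' : Par (σ * Mmat a e) := by
    rcases hσ with hσ | hσ <;> exact par_mul_B hσ.1.2 (Mmat_mod2_B ha2 he)
  have hdet' : (σ * Mmat a e).det = 1 ∨ (σ * Mmat a e).det = -1 := by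
    have h := Matrix.det_mul σ (Mmat a e)
    rw [Mmat_det] at h
    rcases hσ with hσ | hσ <;> rcases hσ.1.1 with h1 | h1 <;> rcases he with rfl | rfl <;>
      rw [h, h1] <;> norm_num
  have hprod := mul_Mmat σ a e
  rw [hprod] at hpar' hdet' ⊢
  obtain ⟨A, B, C, DD, hA, hB, hC, hD⟩ : ∃ A B C DD, σ 0 0 = A ∧ σ 0 1 = B ∧ σ 1 0 = C ∧ σ 1 1 = DD :=
    ⟨_, _, _, _, rfl, rfl, rfl, rfl⟩
  rw [hA, hB, hC, hD] at hpar' hdet' ⊢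
  rcases hσ with hσ | hσ
  · obtain ⟨⟨hdet, hpar⟩, hA0, hB0, hC0, hD0, hDB, hC1, hCA, hreal⟩ := hσ
    simp only [hA, hB, hC, hD] at hA0 hB0 hC0 hD0 hDB hC1 hCA hreal
    have hA1 : 1 ≤ A := le_trans hC1 hCA
    have hint := (gphi_iff A B hB0).1 hreal
    have haA : 0 ≤ A * (a - 1) := mul_nonneg hA0 (by omega)
    have haC : 0 ≤ C * (a - 1) := mul_nonneg (by omega) (by omega)
    have haAC : 0 ≤ (A - C) * (a - 1) := mul_nonneg (by omega) (by omega)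
    rcases he with rfl | rfl
    · left
      refine mem_Splus_mk _ _ _ _ hdet' hpar' (by nlinarith) (by linarith) (by nlinarith)
        (by linarith) (by linarith) (by nlinarith) (by nlinarith) ?_
      have hkey : 3*A ≤ 2*(A * a + B) + A * 1 := by nlinarith
      have hsq : (3*A)^2 ≤ (2*(A * a + B) + A * 1)^2 := sq_mono (by linarith) hkey
      refine (gphi_iff (A * a + B) (A * 1) (by linarith)).2 ⟨by nlinarith, by nlinarith [sq_nonneg (A-1)]⟩
    · right
      have ha3 : 3 ≤ a := by omega
      have haA3 : 0 ≤ A * (a - 3) := mul_nonneg hA0 (by omega)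
      refine mem_Sminus_mk _ _ _ _ hdet' hpar' (by nlinarith) (by linarith) (by nlinarith)
        (by linarith) (by linarith) (by nlinarith) (by nlinarith) ?_
      have hx : -(A * (-1)) = A := by ring
      rw [hx]
      have hkey : 3*A ≤ 2*(A * a + B) - 3*A := by nlinarith
      have hsq : (3*A)^2 ≤ (2*(A * a + B) - 3*A)^2 := sq_mono (by linarith) hkey
      refine (Gphi_iff (A * a + B) A (by linarith)).2 ⟨by nlinarith, by nlinarith [sq_nonneg (A-1)]⟩
  · obtain ⟨⟨hdet, hpar⟩, hA0, hB0, hC0, hD0, hDB, hC1, hCA, hreal⟩ := hσ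
    simp only [hA, hB, hC, hD] at hA0 hB0 hC0 hD0 hDB hC1 hCA hreal
    have hA1 : 1 ≤ A := le_trans hC1 hCA
    have hint := (Gphi_iff A (-B) hB0).1 hreal
    have hdet2 : (-B)*C - A*(-DD) = 1 ∨ (-B)*C - A*(-DD) = -1 := by
      have h : (-B)*C - A*(-DD) = σ.det := by
        rw [Matrix.det_fin_two, hA, hB, hC, hD]; ring
      rw [h]; exact hdet
    obtain ⟨hAB, hDC, hACBD⟩ := aux_minus A (-B) C (-DD) hdet2 hB0 hD0 hDB hC1 hCA hint.1 hint.2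
    have haA : 0 ≤ A * (a - 1) := mul_nonneg hA0 (by omega)
    have haC : 0 ≤ C * (a - 1) := mul_nonneg (by omega) (by omega)
    have haAC : 0 ≤ (A - C) * (a - 1) := mul_nonneg (by omega) (by omega)
    rcases he with rfl | rfl
    · left
      refine mem_Splus_mk _ _ _ _ hdet' hpar' (by nlinarith) (by linarith) (by nlinarith)
        (by linarith) (by linarith) (by nlinarith) (by nlinarith) ?_
      have hx : A * 1 = A := by ring
      rw [hx]
      have hkey : 3*A - 2*(-B) ≤ 2*(A * a + B) + A := by nlinarith
      have hkey0 : 0 ≤ 3*A - 2*(-B) := by omega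
      have hsq : (3*A - 2*(-B))^2 ≤ (2*(A * a + B) + A)^2 := sq_mono hkey0 hkey
      refine (gphi_iff (A * a + B) A (by linarith)).2 ⟨by nlinarith, by nlinarith⟩
    · right
      have ha3 : 3 ≤ a := by omega
      have haA3 : 0 ≤ A * (a - 3) := mul_nonneg hA0 (by omega)
      refine mem_Sminus_mk _ _ _ _ hdet' hpar' (by nlinarith) (by linarith) (by nlinarith)
        (by linarith) (by linarith) (by nlinarith) (by nlinarith) ?_
      have hx : -(A * (-1)) = A := by ring
      rw [hx]
      have hkey : 3*A - 2*(-B) ≤ 2*(A * a + B) - 3*A := by nlinarith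
      have hkey0 : 0 ≤ 3*A - 2*(-B) := by omega
      have hsq : (3*A - 2*(-B))^2 ≤ (2*(A * a + B) - 3*A)^2 := sq_mono hkey0 hkey
      refine (Gphi_iff (A * a + B) A (by linarith)).2 ⟨by nlinarith, by nlinarith⟩

lemma Pset_single (a e : ℤ) (ha : Odd a) (hap : 0 < a) (he : e = 1 ∨ e = -1)
    (hae : 2 ≤ a + e) : Mmat a e ∈ Pset := by
  refine ⟨1, fun _ => a, fun _ => e, one_pos, fun i _ => ⟨ha, hap, he, hae⟩, ?_⟩
  simp [Mmat]

lemma Pset_mul (σ : Mat) (hσ : σ ∈ Pset) (a e : ℤ) (ha : Odd a) (hap : 0 < a)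
    (he : e = 1 ∨ e = -1) (hae : 2 ≤ a + e) : σ * Mmat a e ∈ Pset := by
  obtain ⟨n, f, g, hn, hcond, rfl⟩ := hσ
  refine ⟨n+1, fun i => if i = n then a else f i, fun i => if i = n then e else g i,
    by omega, ?_, ?_⟩
  · intro i hi
    by_cases h : i = n
    · simp [h]; exact ⟨ha, hap, he, hae⟩
    · simp [h]; exact hcond i (by omega)
  · rw [List.range_succ, List.map_append, List.prod_append]
    simp only [List.map_cons, List.map_nil, List.prod_cons, List.prod_nil, if_pos rfl]
    congr 1
    · congr 1
      apply List.map_congr_left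
      intro i hi
      have : i ≠ n := by simp at hi; omega
      simp [this]
    · simp [Mmat]

lemma forward (n : ℕ) (f g : ℕ → ℤ) (hn : 0 < n)
    (hcond : ∀ i < n, Odd (f i) ∧ 0 < f i ∧ (g i = 1 ∨ g i = -1) ∧ 2 ≤ f i + g i) :
    ((List.range n).map (fun i => !![f i, g i; 1, 0])).prod ∈ Splus ∪ Sminus := by
  induction n with
  | zero => omega
  | succ m ih =>
    rw [List.range_succ, List.map_append, List.prod_append]
    simp only [List.map_cons, List.map_nil, List.prod_cons, List.prod_nil, mul_one]
    obtain ⟨h1, h2, h3, h4⟩ := hcond m (by omega)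
    by_cases hm : m = 0
    · subst hm
      simpa [Mmat] using base_mem (f 0) (g 0) h1 h2 h3 h4
    · have := ih (by omega) (fun i hi => hcond i (by omega))
      exact step_mem _ this (f m) (g m) h1 h2 h3 h4

/-- choice of the greatest odd `a` with `√5·B < 2(A-aB)+3B`. -/
lemma choose_a (A B : ℤ) (hA1 : 1 ≤ A) (hB1 : 1 ≤ B) (k0 : ℤ) (hk0odd : Odd k0)
    (hk01 : 1 ≤ k0)
    (hk0 : 0 < 2*(A - k0*B) + 3*B ∧ 5*B^2 < (2*(A - k0*B)+3*B)^2) :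
    ∃ a : ℤ, Odd a ∧ k0 ≤ a ∧
      (Real.sqrt 5 * B < 2*((A:ℝ) - a*B) + 3*B) ∧
      (2*((A:ℝ) - a*B) + 3*B < 4*B + Real.sqrt 5 * B) := by
  classical
  have hs := s_sq; have h2 := s_gt; have h3 := s_lt
  have hBR : (1:ℝ) ≤ (B:ℝ) := by exact_mod_cast hB1
  set P : ℤ → Prop := fun k => Odd k ∧ 0 < 2*(A - k*B) + 3*B ∧ 5*B^2 < (2*(A - k*B)+3*B)^2
    with hP
  have hbdd : ∃ b : ℤ, ∀ z, P z → z ≤ b := by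
    refine ⟨A + 2*B, ?_⟩
    intro z hz
    by_contra hcon
    push_neg at hcon
    have k1 : 0 ≤ (z - A - 2*B - 1)*B := mul_nonneg (by omega) (by omega)
    have k2 : 0 ≤ (B-1)*A := mul_nonneg (by omega) (by omega)
    have k3 : 0 ≤ (B-1)*B := mul_nonneg (by omega) (by omega)
    nlinarith [hz.2.1]
  have hinh : ∃ z, P z := ⟨k0, hk0odd, hk0.1, hk0.2⟩
  obtain ⟨a, hPa, hmax⟩ := Int.exists_greatest_of_bdd hbdd hinh
  obtain ⟨haodd, hs0pos, hs0sq⟩ := hPa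
  refine ⟨a, haodd, hmax k0 ⟨hk0odd, hk0.1, hk0.2⟩, ?_, ?_⟩
  · -- lower bound, from the defining property
    have hpos : (0:ℝ) < 2*((A:ℝ) - a*B) + 3*B := by exact_mod_cast hs0pos
    have hsq : 5*((B:ℝ))^2 < (2*((A:ℝ) - a*B) + 3*B)^2 := by exact_mod_cast hs0sq
    nlinarith [Real.sqrt_nonneg 5, mul_nonneg (Real.sqrt_nonneg 5) (by linarith : (0:ℝ) ≤ (B:ℝ))]
  · -- upper bound, from maximality at a+2 plus irrationality
    have ha2odd : Odd (a+2) := by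
      rcases haodd with ⟨m, hm⟩; exact ⟨m+1, by omega⟩
    have hfail : ¬(0 < 2*(A - (a+2)*B) + 3*B ∧ 5*B^2 < (2*(A - (a+2)*B)+3*B)^2) := by
      intro h
      have := hmax (a+2) ⟨ha2odd, h.1, h.2⟩
      omega
    have hER : (2*((A:ℝ) - (a+2)*B) + 3*B) = 2*((A:ℝ) - a*B) + 3*B - 4*B := by ring
    rcases not_and_or.1 hfail with h | h
    · push_neg at h
      have : (2*((A:ℝ) - (a+2)*B) + 3*B) ≤ 0 := by exact_mod_cast h
      rw [hER] at this
      nlinarith [mul_pos (show (0:ℝ) < Real.sqrt 5 by linarith) (show (0:ℝ) < (B:ℝ) by linarith)]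
    · push_neg at h
      have hle : (2*((A:ℝ) - (a+2)*B) + 3*B)^2 ≤ 5*((B:ℝ))^2 := by exact_mod_cast h
      have hsB : (0:ℝ) < Real.sqrt 5 * B := by
        apply mul_pos <;> linarith
      have hle2 : 2*((A:ℝ) - a*B) + 3*B - 4*B ≤ Real.sqrt 5 * B := by
        rw [hER] at hle
        nlinarith
      have hne : 2*((A:ℝ) - a*B) + 3*B - 4*B ≠ Real.sqrt 5 * B := by
        have := irr5 (2*(A - a*B) + 3*B - 4*B) B (by omega)
        intro hc
        apply this
        push_cast
        linarith [hc]
      have := lt_of_le_of_ne hle2 hne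
      linarith

/-- unified descent arithmetic, branch `t ≥ 1`. -/
lemma descent_pos (A B C DD a : ℤ) (hε : B*C - A*DD = 1 ∨ B*C - A*DD = -1)
    (hB1 : 1 ≤ B) (hDD1 : 1 ≤ DD) (hDB : DD ≤ B) (hCA : C ≤ A)
    (ht : 1 ≤ A - a*B) : 0 ≤ C - a*DD ∧ C - a*DD ≤ A - a*B := by
  have hid : B*(C - a*DD) = DD*(A - a*B) + (B*C - A*DD) := by ring
  have k1 : 1*1 ≤ DD*(A - a*B) :=
    mul_le_mul hDD1 ht (by omega) (by omega)
  constructor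
  · by_contra hu
    push_neg at hu
    have : B*(C - a*DD) ≤ B*(-1) := mul_le_mul_of_nonneg_left (by omega) (by omega)
    rcases hε with h | h <;> omega
  · have hBt : B*(C-a*DD) ≤ B*(A-a*B) → C - a*DD ≤ A - a*B := fun h =>
      le_of_mul_le_mul_left h (by omega)
    rcases hε with h | h
    · by_cases hBD : B = DD
      · exfalso
        have : B*C - A*DD = B*(C-A) := by rw [hBD]; ring
        have h2 : B*(C-A) ≤ 0 := mul_nonpos_of_nonneg_of_nonpos (by omega) (by omega)
        omega
      · have k3 : (A - a*B) ≤ (B-DD)*(A-a*B) :=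
          le_mul_of_one_le_left (by omega) (by omega)
        apply hBt
        nlinarith
    · apply hBt
      have : DD*(A-a*B) ≤ B*(A-a*B) := mul_le_mul_of_nonneg_right hDB (by omega)
      omega

/-- unified descent arithmetic, branch `t ≤ -1`. -/
lemma descent_neg (A B C DD a : ℤ) (hε : B*C - A*DD = 1 ∨ B*C - A*DD = -1)
    (hB1 : 1 ≤ B) (hDD1 : 1 ≤ DD) (hDB : DD ≤ B) (hCA : C ≤ A)
    (ht : A - a*B ≤ -1) (hB1t : B = 1 → 0 ≤ A - a*B) :
    0 ≤ -(C - a*DD) ∧ -(C - a*DD) ≤ -(A - a*B) := by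
  have hid : B*(-(C - a*DD)) = DD*(-(A - a*B)) - (B*C - A*DD) := by ring
  have k1 : 1*1 ≤ DD*(-(A - a*B)) :=
    mul_le_mul hDD1 (by omega) (by omega) (by omega)
  constructor
  · by_contra hu
    push_neg at hu
    have hk : B*(-(C - a*DD)) ≤ B*(-1) := mul_le_mul_of_nonneg_left (by omega) (by omega)
    rcases hε with h | h <;> nlinarith
  · have hBt : B*(-(C-a*DD)) ≤ B*(-(A-a*B)) → -(C - a*DD) ≤ -(A - a*B) := fun h =>
      le_of_mul_le_mul_left h (by omega)
    rcases hε with h | h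
    · apply hBt
      have hk : DD*(-(A-a*B)) ≤ B*(-(A-a*B)) := mul_le_mul_of_nonneg_right hDB (by omega)
      nlinarith
    · by_cases hBD : B = DD
      · exfalso
        have hform : B*(A-C) = 1 := by rw [hBD] at h ⊢; nlinarith [h]
        have hBdvd : B ∣ 1 := ⟨A - C, hform.symm⟩
        have := Int.le_of_dvd one_pos hBdvd
        have hB1' : B = 1 := by omega
        have := hB1t hB1'
        omega
      · have k3 : (-(A - a*B)) ≤ (B-DD)*(-(A-a*B)) :=
          le_mul_of_one_le_left (by omega) (by omega)
        apply hBt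
        nlinarith

/-- unified descent arithmetic, degenerate `t = 0`. -/
lemma descent_zero (A B C DD : ℤ) (a : ℤ) (hε : B*C - A*DD = 1 ∨ B*C - A*DD = -1)
    (hB1 : 1 ≤ B) (hDD1 : 1 ≤ DD) (hDB : DD ≤ B) (hCA : C ≤ A)
    (ht : A - a*B = 0) : B = 1 ∧ DD = 1 ∧ C = A - 1 := by
  have hid : B*(C - a*DD) = DD*(A - a*B) + (B*C - A*DD) := by ring
  have hBdvd : B ∣ 1 := by
    rcases hε with h | h
    · refine ⟨C - a*DD, ?_⟩
      nlinarith [hid]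
    · refine ⟨-(C - a*DD), ?_⟩
      nlinarith [hid]
  have hBle := Int.le_of_dvd one_pos hBdvd
  have hB : B = 1 := by omega
  have hDD : DD = 1 := by omega
  refine ⟨hB, hDD, ?_⟩
  rw [hB, hDD] at hε
  rcases hε with h | h <;> omega

lemma mul_N (σ : Mat) (a e : ℤ) :
    σ * !![0, 1; e, -(e*a)] =
      !![σ 0 1 * e, σ 0 0 - σ 0 1 * (e*a); σ 1 1 * e, σ 1 0 - σ 1 1 * (e*a)] := by
  ext i j
  fin_cases i <;> fin_cases j <;>
    simp [Matrix.mul_apply, Fin.sum_univ_two] <;> ring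

lemma NM_one (a e : ℤ) (he : e = 1 ∨ e = -1) :
    (!![0, 1; e, -(e*a)] : Mat) * Mmat a e = 1 := by
  rcases he with rfl | rfl <;>
    · rw [Mmat, Matrix.mul_fin_two, Matrix.one_fin_two]
      norm_num

lemma N_mod2 (a e : ℤ) (ha : a % 2 = 1) (he : e = 1 ∨ e = -1) :
    Mod2Eq !![0, 1; e, -(e*a)] !![0, 1; 1, 1] := by
  rcases he with rfl | rfl <;>
    · apply mod2_concrete <;> omega
set_option maxHeartbeats 2000000 in
lemma backward (N : ℕ) : ∀ σ : Mat, σ ∈ Splus ∪ Sminus →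
    (σ 0 0).natAbs + (σ 0 1).natAbs ≤ N → σ ∈ Pset := by
  induction N with
  | zero =>
    intro σ hσ hm
    exfalso
    rcases hσ with ⟨_, hA0, _, _, _, _, hC1, hCA, _⟩ | ⟨_, hA0, _, _, _, _, hC1, hCA, _⟩ <;>
      omega
  | succ N ih =>
    intro σ hσ hm
    have hs5 := s_sq; have hs2 := s_gt; have hs3 := s_lt
    rcases hσ with hσ | hσ
    · -- σ ∈ Splus
      obtain ⟨⟨hdet, hpar⟩, hA0, hB0, hC0, hD0, hDB, hC1, hCA, hreal⟩ := hσ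
      obtain ⟨A, B, C, DD, hA, hB, hC, hD⟩ :
          ∃ A B C DD, σ 0 0 = A ∧ σ 0 1 = B ∧ σ 1 0 = C ∧ σ 1 1 = DD :=
        ⟨_, _, _, _, rfl, rfl, rfl, rfl⟩
      simp only [hA, hB, hC, hD] at hA0 hB0 hC0 hD0 hDB hC1 hCA hreal hm
      have hA1 : 1 ≤ A := le_trans hC1 hCA
      have hε : B*C - A*DD = 1 ∨ B*C - A*DD = -1 := by
        have hdv : B*C - A*DD = -σ.det := by
          rw [Matrix.det_fin_two, hA, hB, hC, hD]; ring
        rcases hdet with h | h <;> rw [hdv, h] <;> [right; left] <;> norm_num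
      have hint := (gphi_iff A B hB0).1 hreal
      by_cases hDD : DD = 0
      · -- base case : σ = Mmat A 1
        subst hDD
        have h1 : B*C = 1 := by
          rcases hε with h | h
          · linarith
          · exfalso
            have := mul_nonneg hB0 (by omega : (0:ℤ) ≤ C)
            linarith
        have hBdvd : B ∣ 1 := ⟨C, h1.symm⟩
        have hBle := Int.le_of_dvd one_pos hBdvd
        have hB1' : B = 1 := by
          rcases (by omega : B = 0 ∨ 1 ≤ B) with h0 | h0
          · exfalso; rw [h0] at h1; simp at h1
          · omega
        have hC1' : C = 1 := by rw [hB1'] at h1; omega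
        have hApar : A % 2 = 1 := by
          rcases hpar with h | h | h
          · exfalso
            have := h 0 1
            simp [Matrix.one_apply] at this
            omega
          · exfalso
            have := h 1 1
            simp at this
            omega
          · have := h 0 0
            simpa [hA] using this
        have hfct : σ = Mmat A 1 := by
          rw [Matrix.eta_fin_two σ, hA, hB, hC, hD, hB1', hC1']
          simp [Mmat]
        rw [hfct]
        exact Pset_single A 1 (Int.odd_iff.2 hApar) (by omega) (Or.inl rfl) (by omega)
      · -- descent
        have hDD1 : 1 ≤ DD := by omega
        have hB1 : 1 ≤ B := by omega
        obtain ⟨a, haodd, ha1, hlow, hhigh⟩ := choose_a A B hA1 hB1 1 ⟨0, by ring⟩ le_rfl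
          (by constructor
              · have : 2*(A - 1*B) + 3*B = 2*A + B := by ring
                rw [this]; exact hint.1
              · have : 2*(A - 1*B) + 3*B = 2*A + B := by ring
                rw [this]; exact hint.2)
        have ha2 : a % 2 = 1 := Int.odd_iff.1 haodd
        have haB : 1 ≤ a*B := by nlinarith
        have hσ'N : (!![B, A - a*B; DD, C - a*DD] : Mat) = σ * !![0,1;1,-(1*a)] := by
          rw [mul_N, hA, hB, hC, hD]
          ext i j
          fin_cases i <;> fin_cases j <;> simp <;> ring
        have hfct : σ = (!![B, A - a*B; DD, C - a*DD] : Mat) * Mmat a 1 := by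
          rw [hσ'N, mul_assoc, NM_one a 1 (Or.inl rfl), mul_one]
        have hdet3 : (!![B, A - a*B; DD, C - a*DD] : Mat).det = B*C - A*DD := by
          rw [Matrix.det_fin_two_of]; ring
        have hdet3' : (!![B, A - a*B; DD, C - a*DD] : Mat).det = 1 ∨
            (!![B, A - a*B; DD, C - a*DD] : Mat).det = -1 := by
          rw [hdet3]; exact hε
        have hpar3 : Par (!![B, A - a*B; DD, C - a*DD] : Mat) := by
          rw [hσ'N]
          exact par_mul_A hpar (N_mod2 a 1 ha2 (Or.inl rfl))
        have hE0 : (!![B, A - a*B; DD, C - a*DD] : Mat) 0 0 = B := by simp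
        have hE1 : (!![B, A - a*B; DD, C - a*DD] : Mat) 0 1 = A - a*B := by simp
        rcases lt_trichotomy (A - a*B) 0 with hneg | hzero | hpos
        · -- t ≤ -1 : σ' ∈ Sminus
          have hB1t : B = 1 → 0 ≤ A - a*B := by
            intro hBv
            have hBR : ((B:ℤ):ℝ) = 1 := by exact_mod_cast hBv
            rw [hBR] at hlow
            have : ((-1:ℤ):ℝ) < 2*((A:ℝ) - a*B) := by
              rw [hBR]  -- no-op ; keep casts aligned
              push_cast
              push_cast at hlow
              nlinarith
            have hi : (-1:ℤ) < 2*(A - a*B) := by exact_mod_cast (by push_cast at this ⊢; linarith : ((-1:ℤ):ℝ) < ((2*(A-a*B) : ℤ):ℝ))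
            omega
          obtain ⟨hu0, hut⟩ := descent_neg A B C DD a hε hB1 hDD1 hDB hCA (by omega) hB1t
          have hgR : (Gphi + 1) * ((-(A - a*B) : ℤ):ℝ) < ((B:ℤ):ℝ) := by
            unfold Gphi
            push_cast
            push_cast at hlow
            nlinarith [mul_pos (show (0:ℝ) < 3 + Real.sqrt 5 by linarith)
              (show (0:ℝ) < 2*((A:ℝ) - a*B) + 3*B - Real.sqrt 5 * B by linarith)]
          have hmem' : (!![B, A - a*B; DD, C - a*DD] : Mat) ∈ Sminus := by
            refine mem_Sminus_mk _ _ _ _ hdet3' hpar3 (by omega) (by omega) (by omega)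
              hu0 hut hDD1 hDB ?_
            exact hgR
          have htA : -(A - a*B) ≤ A - 1 := by
            have hR : ((-(A - a*B):ℤ):ℝ) < ((A:ℤ):ℝ) := by
              push_cast
              push_cast at hlow hreal
              unfold gphi at hreal
              nlinarith
            have : (-(A - a*B):ℤ) < A := by exact_mod_cast hR
            omega
          have hP := ih _ (Or.inr hmem') (by rw [hE0, hE1]; omega)
          rw [hfct]
          exact Pset_mul _ hP a 1 haodd (by omega) (Or.inl rfl) (by omega)
        · -- t = 0 : contradiction via parity
          exfalso
          obtain ⟨hB1', hDD1', hCA'⟩ := descent_zero A B C DD a hε hB1 hDD1 hDB hCA hzero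
          have hAa : A = a := by rw [hB1'] at hzero; omega
          have hAodd : A % 2 = 1 := by rw [hAa]; exact ha2
          rcases hpar with h | h | h
          · have := h 0 1
            simp [Matrix.one_apply] at this
            omega
          · have := h 0 0
            simp [hA] at this
            omega
          · have := h 1 1
            simp [hD] at this
            omega
        · -- t ≥ 1 : σ' ∈ Splus
          obtain ⟨hu0, hut⟩ := descent_pos A B C DD a hε hB1 hDD1 hDB hCA (by omega)
          have hgR : gphi * ((A - a*B : ℤ):ℝ) < ((B:ℤ):ℝ) := by
            unfold gphi
            push_cast
            push_cast at hhigh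
            nlinarith [mul_pos (show (0:ℝ) < Real.sqrt 5 - 1 by linarith)
              (show (0:ℝ) < (B:ℝ) + Real.sqrt 5 * B - 2*((A:ℝ) - a*B) by linarith)]
          have hmem' : (!![B, A - a*B; DD, C - a*DD] : Mat) ∈ Splus := by
            refine mem_Splus_mk _ _ _ _ hdet3' hpar3 (by omega) (by omega) (by omega)
              hu0 hut hDD1 hDB ?_
            exact hgR
          have hP := ih _ (Or.inl hmem') (by rw [hE0, hE1]; omega)
          rw [hfct]
          exact Pset_mul _ hP a 1 haodd (by omega) (Or.inl rfl) (by omega)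
    · -- σ ∈ Sminus
      obtain ⟨⟨hdet, hpar⟩, hA0, hB0, hC0, hD0, hDB, hC1, hCA, hreal⟩ := hσ
      obtain ⟨A, B, C, DD, hA, hB, hC, hD⟩ :
          ∃ A B C DD, σ 0 0 = A ∧ σ 0 1 = -B ∧ σ 1 0 = C ∧ σ 1 1 = -DD :=
        ⟨σ 0 0, -(σ 0 1), σ 1 0, -(σ 1 1), rfl, by ring, rfl, by ring⟩
      simp only [hA, hB, hC, hD, neg_neg] at hA0 hB0 hC0 hD0 hDB hC1 hCA hreal hm
      have hA1 : 1 ≤ A := le_trans hC1 hCA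
      have hε : B*C - A*DD = 1 ∨ B*C - A*DD = -1 := by
        have hdv : B*C - A*DD = σ.det := by
          rw [Matrix.det_fin_two, hA, hB, hC, hD]; ring
        rcases hdet with h | h <;> rw [hdv, h] <;> [left; right] <;> norm_num
      have hint := (Gphi_iff A B hB0).1 hreal
      by_cases hDD : DD = 0
      · -- base case : σ = Mmat A (-1)
        have h1 : B*C = 1 := by
          rcases hε with h | h
          · rw [hDD] at h; linarith
          · exfalso
            rw [hDD] at h
            have := mul_nonneg hB0 (by omega : (0:ℤ) ≤ C)
            linarith
        have hBdvd : B ∣ 1 := ⟨C, h1.symm⟩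
        have hBle := Int.le_of_dvd one_pos hBdvd
        have hB1' : B = 1 := by
          rcases (by omega : B = 0 ∨ 1 ≤ B) with h0 | h0
          · exfalso; rw [h0] at h1; simp at h1
          · omega
        have hC1' : C = 1 := by rw [hB1'] at h1; omega
        have hA3 : 3 ≤ A := by
          rw [hB1'] at hint
          nlinarith [hint.1, hint.2]
        have hApar : A % 2 = 1 := by
          rcases hpar with h | h | h
          · exfalso
            have := h 0 1
            simp [Matrix.one_apply, hB] at this
            omega
          · exfalso
            have := h 1 1
            simp [hD] at this
            omega
          · have := h 0 0
            simpa [hA] using this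
        have hfct : σ = Mmat A (-1) := by
          rw [Matrix.eta_fin_two σ, hA, hB, hC, hD, hB1', hC1', hDD]
          simp [Mmat]
        rw [hfct]
        exact Pset_single A (-1) (Int.odd_iff.2 hApar) (by omega) (Or.inr rfl) (by omega)
      · -- descent
        have hDD1 : 1 ≤ DD := by omega
        have hB1 : 1 ≤ B := by omega
        obtain ⟨a, haodd, ha3, hlow, hhigh⟩ := choose_a A B hA1 hB1 3 ⟨1, by ring⟩
          (by omega)
          (by constructor
              · have : 2*(A - 3*B) + 3*B = 2*A - 3*B := by ring
                rw [this]; exact hint.1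
              · have : 2*(A - 3*B) + 3*B = 2*A - 3*B := by ring
                rw [this]; exact hint.2)
        have ha2 : a % 2 = 1 := Int.odd_iff.1 haodd
        have haB : 1 ≤ a*B := by nlinarith
        have hσ'N : (!![B, A - a*B; DD, C - a*DD] : Mat) = σ * !![0,1;-1,-(-1*a)] := by
          rw [mul_N, hA, hB, hC, hD]
          ext i j
          fin_cases i <;> fin_cases j <;> simp <;> ring
        have hfct : σ = (!![B, A - a*B; DD, C - a*DD] : Mat) * Mmat a (-1) := by
          rw [hσ'N, mul_assoc, NM_one a (-1) (Or.inr rfl), mul_one]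
        have hdet3 : (!![B, A - a*B; DD, C - a*DD] : Mat).det = B*C - A*DD := by
          rw [Matrix.det_fin_two_of]; ring
        have hdet3' : (!![B, A - a*B; DD, C - a*DD] : Mat).det = 1 ∨
            (!![B, A - a*B; DD, C - a*DD] : Mat).det = -1 := by
          rw [hdet3]; exact hε
        have hpar3 : Par (!![B, A - a*B; DD, C - a*DD] : Mat) := by
          rw [hσ'N]
          exact par_mul_A hpar (N_mod2 a (-1) ha2 (Or.inr rfl))
        have hE0 : (!![B, A - a*B; DD, C - a*DD] : Mat) 0 0 = B := by simp
        have hE1 : (!![B, A - a*B; DD, C - a*DD] : Mat) 0 1 = A - a*B := by simp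
        rcases lt_trichotomy (A - a*B) 0 with hneg | hzero | hpos
        · -- t ≤ -1 : σ' ∈ Sminus
          have hB1t : B = 1 → 0 ≤ A - a*B := by
            have hgen : (-B:ℤ) < 2*(A - a*B) := by
              have hgr : ((-B:ℤ):ℝ) < ((2*(A-a*B) : ℤ):ℝ) := by
                push_cast
                nlinarith [mul_nonneg (show (0:ℝ) ≤ Real.sqrt 5 - 2 by linarith)
                  (show (0:ℝ) ≤ (B:ℝ) by positivity)]
              exact_mod_cast hgr
            intro hBv
            omega
          obtain ⟨hu0, hut⟩ := descent_neg A B C DD a hε hB1 hDD1 hDB hCA (by omega) hB1t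
          have hgR : (Gphi + 1) * ((-(A - a*B) : ℤ):ℝ) < ((B:ℤ):ℝ) := by
            unfold Gphi
            push_cast
            nlinarith [mul_pos (show (0:ℝ) < 3 + Real.sqrt 5 by linarith)
              (show (0:ℝ) < 2*((A:ℝ) - a*B) + 3*B - Real.sqrt 5 * B by linarith)]
          have hmem' : (!![B, A - a*B; DD, C - a*DD] : Mat) ∈ Sminus := by
            refine mem_Sminus_mk _ _ _ _ hdet3' hpar3 (by omega) (by omega) (by omega)
              hu0 hut hDD1 hDB ?_
            exact hgR
          have htA : -(A - a*B) ≤ A - 1 := by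
            have hR : ((-(A - a*B):ℤ):ℝ) < ((A:ℤ):ℝ) := by
              push_cast
              unfold Gphi at hreal
              push_cast at hreal
              nlinarith
            have : (-(A - a*B):ℤ) < A := by exact_mod_cast hR
            omega
          have hP := ih _ (Or.inr hmem') (by rw [hE0, hE1]; omega)
          rw [hfct]
          exact Pset_mul _ hP a (-1) haodd (by omega) (Or.inr rfl) (by omega)
        · -- t = 0 : contradiction via parity
          exfalso
          obtain ⟨hB1', hDD1', hCA'⟩ := descent_zero A B C DD a hε hB1 hDD1 hDB hCA hzero
          have hAa : A = a := by rw [hB1'] at hzero; omega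
          have hAodd : A % 2 = 1 := by rw [hAa]; exact ha2
          rcases hpar with h | h | h
          · have := h 0 1
            simp [Matrix.one_apply, hB] at this
            omega
          · have := h 0 0
            simp [hA] at this
            omega
          · have := h 1 1
            simp [hD] at this
            omega
        · -- t ≥ 1 : σ' ∈ Splus
          obtain ⟨hu0, hut⟩ := descent_pos A B C DD a hε hB1 hDD1 hDB hCA (by omega)
          have hgR : gphi * ((A - a*B : ℤ):ℝ) < ((B:ℤ):ℝ) := by
            unfold gphi
            push_cast
            push_cast at hhigh
            nlinarith [mul_pos (show (0:ℝ) < Real.sqrt 5 - 1 by linarith)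
              (show (0:ℝ) < (B:ℝ) + Real.sqrt 5 * B - 2*((A:ℝ) - a*B) by linarith)]
          have hmem' : (!![B, A - a*B; DD, C - a*DD] : Mat) ∈ Splus := by
            refine mem_Splus_mk _ _ _ _ hdet3' hpar3 (by omega) (by omega) (by omega)
              hu0 hut hDD1 hDB ?_
            exact hgR
          have hP := ih _ (Or.inl hmem') (by rw [hE0, hE1]; omega)
          rw [hfct]
          exact Pset_mul _ hP a (-1) haodd (by omega) (Or.inr rfl) (by omega)

theorem Pset_eq_Splus_union_Sminus : Pset = Splus ∪ Sminus := by
  ext σ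
  constructor
  · rintro ⟨n, f, g, hn, hcond, rfl⟩
    exact forward n f g hn hcond
  · intro h
    exact backward ((σ 0 0).natAbs + (σ 0 1).natAbs) σ h le_rfl
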